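/- Let C → Q (with map φ) be a Girard couple with cyclic dualizing element d. Define G = {(a, c) ∈ Q × C : φ(c) ≤ a} with componentwise joins and multiplication (a₁, c₁)·(a₂, c₂) = (a₁·a₂, a₁·c₂ ∨ c₁·a₂). Then G is a quantale, it is closed in Q × C (i.e. φ(a₁·c₂ ∨ c₁·a₂) ≤ a₁·a₂), the maps γ(c) = (φ(c), c) and α(a, c) = a are quantale homomorphisms with φ = α∘γ, (e, 0) is a unit of G where e is the unit of Q, and (1_Q, d) is a cyclic dualizing element of G with (a, c)^⊥ = (c^⊥, a^⊥); hence G is a Girard quantale. -/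

import Mathlib

/-- A quantale: a complete lattice with an associative multiplication
distributing over arbitrary joins in both variables. -/
class Quantale' (α : Type*) extends CompleteLattice α, Mul α where
  mul_assoc : ∀ a b c : α, a * b * c = a * (b * c)
  mul_sSup : ∀ (a : α) (s : Set α), a * sSup s = ⨆ b ∈ s, a * b
  sSup_mul : ∀ (s : Set α) (a : α), sSup s * a = ⨆ b ∈ s, b * a

/-- A couple of quantales: a quantale `Q`, a quantale `C` which is also a
`Q`-bimodule, and a coupling map `φ : C → Q` which is a join-preserving
`Q`-bimodule homomorphism satisfying `φ(c₁)·c₂ = c₁·φ(c₂) = c₁·c₂`. -/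
structure Couple (C Q : Type*) [Quantale' C] [Quantale' Q] where
  φ : C → Q
  /-- the left action of `Q` on `C` -/
  act : Q → C → C
  /-- the right action of `Q` on `C` -/
  actr : C → Q → C
  act_sSup : ∀ (a : Q) (s : Set C), act a (sSup s) = ⨆ c ∈ s, act a c
  sSup_act : ∀ (s : Set Q) (c : C), act (sSup s) c = ⨆ a ∈ s, act a c
  actr_sSup : ∀ (c : C) (s : Set Q), actr c (sSup s) = ⨆ a ∈ s, actr c a
  sSup_actr : ∀ (s : Set C) (a : Q), actr (sSup s) a = ⨆ c ∈ s, actr c a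
  act_mul : ∀ (a b : Q) (c : C), act (a * b) c = act a (act b c)
  actr_mul : ∀ (c : C) (a b : Q), actr c (a * b) = actr (actr c a) b
  act_actr : ∀ (a : Q) (c : C) (b : Q), actr (act a c) b = act a (actr c b)
  φ_sSup : ∀ s : Set C, φ (sSup s) = ⨆ c ∈ s, φ c
  φ_act : ∀ (a : Q) (c : C), φ (act a c) = a * φ c
  φ_actr : ∀ (c : C) (a : Q), φ (actr c a) = φ c * a
  couple_left : ∀ c₁ c₂ : C, act (φ c₁) c₂ = c₁ * c₂
  couple_right : ∀ c₁ c₂ : C, actr c₁ (φ c₂) = c₁ * c₂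

/-- A Girard couple: a couple together with a cyclic dualizing element `d ∈ C`. -/
structure GirardCouple (C Q : Type*) [Quantale' C] [Quantale' Q] extends Couple C Q where
  d : C
  cyclic : ∀ (a : Q) (c : C), act a c ≤ d ↔ actr c a ≤ d
  /-- `d ⧸ (a → d) = a` for `a ∈ Q` -/
  dualizing_Q₁ : ∀ a : Q, sSup {b : Q | act b (sSup {c : C | actr c a ≤ d}) ≤ d} = a
  /-- `(d ⧸ a) → d = a` for `a ∈ Q` -/
  dualizing_Q₂ : ∀ a : Q, sSup {b : Q | actr (sSup {c : C | act a c ≤ d}) b ≤ d} = a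
  /-- `d ⧸ (c → d) = c` for `c ∈ C` -/
  dualizing_C₁ : ∀ c : C, sSup {c' : C | act (sSup {a : Q | actr c a ≤ d}) c' ≤ d} = c
  /-- `(d ⧸ c) → d = c` for `c ∈ C` -/
  dualizing_C₂ : ∀ c : C, sSup {c' : C | actr c' (sSup {a : Q | act a c ≤ d}) ≤ d} = c


section Aux
variable {α β : Type*} [CompleteLattice α] [CompleteLattice β] {f : α → β}

lemma map_sup_of_sSup (h : ∀ s : Set α, f (sSup s) = ⨆ x ∈ s, f x) (x y : α) :
    f (x ⊔ y) = f x ⊔ f y := by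
  rw [← sSup_pair, h, iSup_pair]

lemma map_mono_of_sSup (h : ∀ s : Set α, f (sSup s) = ⨆ x ∈ s, f x) {x y : α}
    (hxy : x ≤ y) : f x ≤ f y := by
  have := map_sup_of_sSup h x y
  rw [sup_eq_right.mpr hxy] at this
  rw [this]; exact le_sup_left

lemma map_bot_of_sSup (h : ∀ s : Set α, f (sSup s) = ⨆ x ∈ s, f x) : f ⊥ = ⊥ := by
  rw [← sSup_empty, h]; simp

lemma biSup_sup' {ι : Type*} (s : Set ι) (f g : ι → α) :
    ⨆ q ∈ s, (f q ⊔ g q) = (⨆ q ∈ s, f q) ⊔ (⨆ q ∈ s, g q) := by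
  simp_rw [iSup_sup_eq]
end Aux

section QAux
variable {α : Type*} [Quantale' α]

lemma qmul_mono_left {a b : α} (h : a ≤ b) (c : α) : a * c ≤ b * c :=
  map_mono_of_sSup (f := fun x => x * c) (fun s => Quantale'.sSup_mul s c) h

lemma qmul_mono_right (a : α) {b c : α} (h : b ≤ c) : a * b ≤ a * c :=
  map_mono_of_sSup (f := fun x => a * x) (fun s => Quantale'.mul_sSup a s) h
end QAux

section GCLemmas
variable {C Q : Type*} [Quantale' C] [Quantale' Q] (gc : GirardCouple C Q)

/-- `c^⊥` for `c ∈ C`. -/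
noncomputable def cperp (c : C) : Q := sSup {a : Q | gc.act a c ≤ gc.d}

/-- `a^⊥` for `a ∈ Q`. -/
noncomputable def aperp (a : Q) : C := sSup {c : C | gc.act a c ≤ gc.d}

lemma act_mono_left {a b : Q} (h : a ≤ b) (c : C) : gc.act a c ≤ gc.act b c :=
  map_mono_of_sSup (f := fun a => gc.act a c) (fun s => gc.sSup_act s c) h

lemma act_mono_right (a : Q) {c c' : C} (h : c ≤ c') : gc.act a c ≤ gc.act a c' :=
  map_mono_of_sSup (f := fun c => gc.act a c) (fun s => gc.act_sSup a s) h

lemma actr_mono_left {c c' : C} (h : c ≤ c') (a : Q) : gc.actr c a ≤ gc.actr c' a :=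
  map_mono_of_sSup (f := fun c => gc.actr c a) (fun s => gc.sSup_actr s a) h

lemma actr_mono_right (c : C) {a b : Q} (h : a ≤ b) : gc.actr c a ≤ gc.actr c b :=
  map_mono_of_sSup (f := fun a => gc.actr c a) (fun s => gc.actr_sSup c s) h

lemma act_sup_left (a b : Q) (c : C) :
    gc.act (a ⊔ b) c = gc.act a c ⊔ gc.act b c :=
  map_sup_of_sSup (f := fun a => gc.act a c) (fun s => gc.sSup_act s c) a b

lemma act_sup_right (a : Q) (c c' : C) :
    gc.act a (c ⊔ c') = gc.act a c ⊔ gc.act a c' :=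
  map_sup_of_sSup (f := fun c => gc.act a c) (fun s => gc.act_sSup a s) c c'

lemma actr_sup_left (c c' : C) (a : Q) :
    gc.actr (c ⊔ c') a = gc.actr c a ⊔ gc.actr c' a :=
  map_sup_of_sSup (f := fun c => gc.actr c a) (fun s => gc.sSup_actr s a) c c'

lemma actr_sup_right (c : C) (a b : Q) :
    gc.actr c (a ⊔ b) = gc.actr c a ⊔ gc.actr c b :=
  map_sup_of_sSup (f := fun a => gc.actr c a) (fun s => gc.actr_sSup c s) a b

lemma φ_sup (c c' : C) : gc.φ (c ⊔ c') = gc.φ c ⊔ gc.φ c' :=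
  map_sup_of_sSup (f := gc.φ) gc.φ_sSup c c'

lemma act_cperp_le (c : C) : gc.act (cperp gc c) c ≤ gc.d := by
  rw [cperp, gc.sSup_act]
  exact iSup₂_le fun a ha => ha

lemma act_aperp_le (a : Q) : gc.act a (aperp gc a) ≤ gc.d := by
  rw [aperp, gc.act_sSup]
  exact iSup₂_le fun c hc => hc

lemma le_cperp_iff {a : Q} {c : C} : a ≤ cperp gc c ↔ gc.act a c ≤ gc.d :=
  ⟨fun h => le_trans (act_mono_left gc h c) (act_cperp_le gc c), fun h => le_sSup h⟩

lemma le_aperp_iff {a : Q} {c : C} : c ≤ aperp gc a ↔ gc.act a c ≤ gc.d :=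
  ⟨fun h => le_trans (act_mono_right gc a h) (act_aperp_le gc a), fun h => le_sSup h⟩

lemma cperp_aperp (a : Q) : cperp gc (aperp gc a) = a := by
  have h := gc.dualizing_Q₁ a
  have hset : {c : C | gc.actr c a ≤ gc.d} = {c : C | gc.act a c ≤ gc.d} := by
    ext c; exact (gc.cyclic a c).symm
  rw [hset] at h
  exact h

lemma aperp_cperp (c : C) : aperp gc (cperp gc c) = c := by
  have h := gc.dualizing_C₁ c
  have hset : {a : Q | gc.actr c a ≤ gc.d} = {a : Q | gc.act a c ≤ gc.d} := by
    ext a; exact (gc.cyclic a c).symm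
  rw [hset] at h
  exact h

lemma act_bot (a : Q) : gc.act a ⊥ = ⊥ :=
  map_bot_of_sSup (f := fun c => gc.act a c) (fun s => gc.act_sSup a s)

lemma actr_bot (a : Q) : gc.actr ⊥ a = ⊥ :=
  map_bot_of_sSup (f := fun c => gc.actr c a) (fun s => gc.sSup_actr s a)

lemma φ_bot : gc.φ ⊥ = ⊥ :=
  map_bot_of_sSup (f := gc.φ) gc.φ_sSup

end GCLemmas

namespace Stmt17
variable {C Q : Type*} [Quantale' C] [Quantale' Q]

/-- The underlying set `G = {(a, c) : φ(c) ≤ a}` of the glued quantale. -/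
def G (cp : Couple C Q) : Set (Q × C) := {p | cp.φ p.2 ≤ p.1}

/-- The multiplication `(a₁, c₁)·(a₂, c₂) = (a₁a₂, a₁c₂ ∨ c₁a₂)`. -/
def mulG (cp : Couple C Q) (p q : Q × C) : Q × C :=
  (p.1 * q.1, cp.act p.1 q.2 ⊔ cp.actr p.2 q.1)

/-- The map `γ(c) = (φ(c), c)`. -/
def gamma (cp : Couple C Q) (c : C) : Q × C := (cp.φ c, c)

/-- The unit `e = d^⊥` of `Q`. -/
noncomputable def eG (gc : GirardCouple C Q) : Q :=
  sSup {a : Q | gc.act a gc.d ≤ gc.d}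

/-- The cyclic dualizing element `(1_Q, d)` of `G`. -/
def dG (gc : GirardCouple C Q) : Q × C := (⊤, gc.d)

/-- Left orthogonal complement in `G`. -/
noncomputable def lperp (gc : GirardCouple C Q) (p : Q × C) : Q × C :=
  sSup {q | q ∈ G gc.toCouple ∧ mulG gc.toCouple q p ≤ dG gc}

/-- Right orthogonal complement in `G`. -/
noncomputable def rperp (gc : GirardCouple C Q) (p : Q × C) : Q × C :=
  sSup {q | q ∈ G gc.toCouple ∧ mulG gc.toCouple p q ≤ dG gc}


section UnitLemmas
variable {C Q : Type*} [Quantale' C] [Quantale' Q] (gc : GirardCouple C Q)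

lemma eG_eq : eG gc = cperp gc gc.d := rfl

lemma aperp_eG : aperp gc (eG gc) = gc.d := aperp_cperp gc gc.d

lemma actr_d_eG_le : gc.actr gc.d (eG gc) ≤ gc.d :=
  (gc.cyclic _ _).mp (act_cperp_le gc gc.d)

lemma act_eG (c : C) : gc.act (eG gc) c = c := by
  apply le_antisymm
  · have h2 : gc.actr c (cperp gc c) ≤ gc.d := (gc.cyclic _ _).mp (act_cperp_le gc c)
    have h5 : gc.act (cperp gc c) (gc.act (eG gc) c) ≤ gc.d := by
      rw [← gc.act_mul, gc.cyclic, gc.actr_mul]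
      exact le_trans (actr_mono_left gc h2 _) (actr_d_eG_le gc)
    have := (le_aperp_iff gc).mpr h5
    rwa [aperp_cperp] at this
  · set b := cperp gc (gc.act (eG gc) c) with hb
    have h1 : gc.act b (gc.act (eG gc) c) ≤ gc.d := act_cperp_le gc _
    rw [← gc.act_mul, gc.cyclic, gc.actr_mul] at h1
    have h2 : gc.act (eG gc) (gc.actr c b) ≤ gc.d := (gc.cyclic _ _).mpr h1
    have h3 : gc.actr c b ≤ gc.d := by
      have := (le_aperp_iff gc).mpr h2
      rwa [aperp_eG] at this
    have h4 : gc.act b c ≤ gc.d := (gc.cyclic _ _).mpr h3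
    have := (le_aperp_iff gc).mpr h4
    rwa [hb, aperp_cperp] at this

lemma actr_eG (c : C) : gc.actr c (eG gc) = c := by
  apply le_antisymm
  · have h5 : gc.act (cperp gc c) (gc.actr c (eG gc)) ≤ gc.d := by
      rw [← gc.act_actr]
      exact le_trans (actr_mono_left gc (act_cperp_le gc c) _) (actr_d_eG_le gc)
    have := (le_aperp_iff gc).mpr h5
    rwa [aperp_cperp] at this
  · set b := cperp gc (gc.actr c (eG gc)) with hb
    have h1 : gc.act b (gc.actr c (eG gc)) ≤ gc.d := act_cperp_le gc _
    rw [← gc.act_actr] at h1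
    have h2 : gc.act (eG gc) (gc.act b c) ≤ gc.d := (gc.cyclic _ _).mpr h1
    have h3 : gc.act b c ≤ gc.d := by
      have := (le_aperp_iff gc).mpr h2
      rwa [aperp_eG] at this
    have := (le_aperp_iff gc).mpr h3
    rwa [hb, aperp_cperp] at this

lemma mul_eG (a : Q) : a * eG gc = a := by
  have key : aperp gc (a * eG gc) = aperp gc a := by
    unfold aperp
    congr 1
    ext c
    simp only [Set.mem_setOf_eq, gc.act_mul, act_eG]
  calc a * eG gc = cperp gc (aperp gc (a * eG gc)) := (cperp_aperp gc _).symm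
    _ = cperp gc (aperp gc a) := by rw [key]
    _ = a := cperp_aperp gc a

lemma eG_mul (a : Q) : eG gc * a = a := by
  have key : aperp gc (eG gc * a) = aperp gc a := by
    unfold aperp
    congr 1
    ext c
    simp only [Set.mem_setOf_eq, gc.act_mul, act_eG]
  calc eG gc * a = cperp gc (aperp gc (eG gc * a)) := (cperp_aperp gc _).symm
    _ = cperp gc (aperp gc a) := by rw [key]
    _ = a := cperp_aperp gc a

lemma mem_G_iff (cp : Couple C Q) (p : Q × C) : p ∈ G cp ↔ cp.φ p.2 ≤ p.1 := Iff.rfl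

lemma le_dG_iff (p : Q × C) : p ≤ dG gc ↔ p.2 ≤ gc.d := by
  simp [dG, Prod.le_def]

lemma lperp_eq {p : Q × C} (hp : p ∈ G gc.toCouple) :
    lperp gc p = (sSup {a : Q | gc.act a p.2 ≤ gc.d},
                  sSup {c : C | gc.act p.1 c ≤ gc.d}) := by
  have hcond : ∀ q : Q × C,
      (q ∈ G gc.toCouple ∧ mulG gc.toCouple q p ≤ dG gc) ↔
      (gc.φ q.2 ≤ q.1 ∧ gc.act q.1 p.2 ≤ gc.d ∧ gc.actr q.2 p.1 ≤ gc.d) := by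
    intro q
    rw [mem_G_iff, le_dG_iff]
    simp only [mulG, sup_le_iff]
  have h1 : (sSup {q | q ∈ G gc.toCouple ∧ mulG gc.toCouple q p ≤ dG gc} : Q × C).1
      = cperp gc p.2 := by
    rw [Prod.fst_sSup]
    apply le_antisymm
    · apply sSup_le
      rintro b ⟨q, hq, rfl⟩
      exact le_sSup ((hcond q).mp hq).2.1
    · apply sSup_le
      intro b hb
      refine le_sSup ⟨(b, ⊥), (hcond (b, ⊥)).mpr ⟨?_, ?_, ?_⟩, rfl⟩
      · rw [φ_bot]; exact bot_le
      · exact hb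
      · rw [actr_bot]; exact bot_le
  have h2 : (sSup {q | q ∈ G gc.toCouple ∧ mulG gc.toCouple q p ≤ dG gc} : Q × C).2
      = aperp gc p.1 := by
    rw [Prod.snd_sSup]
    apply le_antisymm
    · apply sSup_le
      rintro c ⟨q, hq, rfl⟩
      exact (le_aperp_iff gc).mpr ((gc.cyclic _ _).mpr ((hcond q).mp hq).2.2)
    · apply sSup_le
      intro c hc
      have hc' : gc.act p.1 c ≤ gc.d := hc
      refine le_sSup ⟨(cperp gc p.2 ⊔ gc.φ c, c),
        (hcond _).mpr ⟨le_sup_right, ?_, (gc.cyclic _ _).mp hc'⟩, rfl⟩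
      rw [act_sup_left]
      apply sup_le (act_cperp_le gc p.2)
      rw [gc.couple_left, ← gc.couple_right]
      exact le_trans (actr_mono_right gc c hp) ((gc.cyclic _ _).mp hc')
  exact Prod.ext h1 h2

lemma rperp_eq {p : Q × C} (hp : p ∈ G gc.toCouple) :
    rperp gc p = (sSup {a : Q | gc.act a p.2 ≤ gc.d},
                  sSup {c : C | gc.act p.1 c ≤ gc.d}) := by
  have hcond : ∀ q : Q × C,
      (q ∈ G gc.toCouple ∧ mulG gc.toCouple p q ≤ dG gc) ↔
      (gc.φ q.2 ≤ q.1 ∧ gc.act p.1 q.2 ≤ gc.d ∧ gc.actr p.2 q.1 ≤ gc.d) := by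
    intro q
    rw [mem_G_iff, le_dG_iff]
    simp only [mulG, sup_le_iff]
  have h1 : (sSup {q | q ∈ G gc.toCouple ∧ mulG gc.toCouple p q ≤ dG gc} : Q × C).1
      = cperp gc p.2 := by
    rw [Prod.fst_sSup]
    apply le_antisymm
    · apply sSup_le
      rintro b ⟨q, hq, rfl⟩
      exact (le_cperp_iff gc).mpr ((gc.cyclic _ _).mpr ((hcond q).mp hq).2.2)
    · apply sSup_le
      intro b hb
      refine le_sSup ⟨(b, ⊥), (hcond (b, ⊥)).mpr ⟨?_, ?_, ?_⟩, rfl⟩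
      · rw [φ_bot]; exact bot_le
      · rw [act_bot]; exact bot_le
      · exact (gc.cyclic _ _).mp hb
  have h2 : (sSup {q | q ∈ G gc.toCouple ∧ mulG gc.toCouple p q ≤ dG gc} : Q × C).2
      = aperp gc p.1 := by
    rw [Prod.snd_sSup]
    apply le_antisymm
    · apply sSup_le
      rintro c ⟨q, hq, rfl⟩
      exact (le_aperp_iff gc).mpr ((hcond q).mp hq).2.1
    · apply sSup_le
      intro c hc
      have hc' : gc.act p.1 c ≤ gc.d := hc
      refine le_sSup ⟨(cperp gc p.2 ⊔ gc.φ c, c),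
        (hcond _).mpr ⟨le_sup_right, hc', ?_⟩, rfl⟩
      rw [actr_sup_right]
      apply sup_le ((gc.cyclic _ _).mp (act_cperp_le gc p.2))
      rw [gc.couple_right, ← gc.couple_left]
      exact le_trans (act_mono_left gc hp c) hc'
  exact Prod.ext h1 h2

lemma perp_mem_G {p : Q × C} (hp : p ∈ G gc.toCouple) :
    ((sSup {a : Q | gc.act a p.2 ≤ gc.d},
      sSup {c : C | gc.act p.1 c ≤ gc.d}) : Q × C) ∈ G gc.toCouple := by
  show gc.φ (aperp gc p.1) ≤ cperp gc p.2
  rw [le_cperp_iff, gc.couple_left, ← gc.couple_right]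
  exact le_trans (actr_mono_right gc _ hp) ((gc.cyclic _ _).mp (act_aperp_le gc p.1))

end UnitLemmas

/-- The glueing of a Girard couple is a Girard quantale `G`, through which `φ`
factors as `α∘γ`, with unit `(e, 0)` and cyclic dualizing element `(1_Q, d)`
satisfying `(a, c)^⊥ = (c^⊥, a^⊥)`. -/
theorem stmt17 (gc : GirardCouple C Q) :
    -- G is closed under multiplication (φ(a₁·c₂ ∨ c₁·a₂) ≤ a₁·a₂)
    (∀ p q, p ∈ G gc.toCouple → q ∈ G gc.toCouple →
      mulG gc.toCouple p q ∈ G gc.toCouple) ∧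
    -- the multiplication is associative
    (∀ p q r, mulG gc.toCouple (mulG gc.toCouple p q) r =
      mulG gc.toCouple p (mulG gc.toCouple q r)) ∧
    -- G is closed under (componentwise) joins, so is a complete lattice
    (∀ s : Set (Q × C), s ⊆ G gc.toCouple → sSup s ∈ G gc.toCouple) ∧
    -- the multiplication distributes over joins: G is a quantale
    (∀ (p : Q × C) (s : Set (Q × C)),
      mulG gc.toCouple p (sSup s) = ⨆ q ∈ s, mulG gc.toCouple p q) ∧
    (∀ (p : Q × C) (s : Set (Q × C)),
      mulG gc.toCouple (sSup s) p = ⨆ q ∈ s, mulG gc.toCouple q p) ∧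
    -- γ is a quantale homomorphism into G
    (∀ c : C, gamma gc.toCouple c ∈ G gc.toCouple) ∧
    (∀ s : Set C, gamma gc.toCouple (sSup s) = ⨆ c ∈ s, gamma gc.toCouple c) ∧
    (∀ c₁ c₂ : C, gamma gc.toCouple (c₁ * c₂) =
      mulG gc.toCouple (gamma gc.toCouple c₁) (gamma gc.toCouple c₂)) ∧
    -- α = fst is a quantale homomorphism and φ = α∘γ
    (∀ p q, (mulG gc.toCouple p q).1 = p.1 * q.1) ∧
    (∀ s : Set (Q × C), (sSup s).1 = ⨆ p ∈ s, p.1) ∧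
    (∀ c : C, (gamma gc.toCouple c).1 = gc.φ c) ∧
    -- (e, 0) is a unit of G
    ((eG gc, (⊥ : C)) ∈ G gc.toCouple ∧
     ∀ p, p ∈ G gc.toCouple →
       mulG gc.toCouple (eG gc, ⊥) p = p ∧ mulG gc.toCouple p (eG gc, ⊥) = p) ∧
    -- (1_Q, d) is cyclic
    (dG gc ∈ G gc.toCouple ∧
     ∀ p q, p ∈ G gc.toCouple → q ∈ G gc.toCouple →
       (mulG gc.toCouple p q ≤ dG gc ↔ mulG gc.toCouple q p ≤ dG gc)) ∧
    -- (a, c)^⊥ = (c^⊥, a^⊥)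
    (∀ p, p ∈ G gc.toCouple →
      lperp gc p = (sSup {a : Q | gc.act a p.2 ≤ gc.d},
                    sSup {c : C | gc.act p.1 c ≤ gc.d}) ∧
      rperp gc p = (sSup {a : Q | gc.act a p.2 ≤ gc.d},
                    sSup {c : C | gc.act p.1 c ≤ gc.d})) ∧
    -- (1_Q, d) is dualizing
    (∀ p, p ∈ G gc.toCouple →
      lperp gc (rperp gc p) = p ∧ rperp gc (lperp gc p) = p) := by
  refine ⟨?_, ?_, ?_, ?_, ?_, ?_, ?_, ?_, ?_, ?_, ?_, ?_, ?_, ?_, ?_⟩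
  · -- closure
    intro p q hp hq
    show gc.φ (gc.act p.1 q.2 ⊔ gc.actr p.2 q.1) ≤ p.1 * q.1
    rw [φ_sup, gc.φ_act, gc.φ_actr]
    exact sup_le (qmul_mono_right _ hq) (qmul_mono_left hp _)
  · -- associativity
    intro p q r
    apply Prod.ext
    · exact Quantale'.mul_assoc p.1 q.1 r.1
    · show gc.act (p.1 * q.1) r.2 ⊔ gc.actr (gc.act p.1 q.2 ⊔ gc.actr p.2 q.1) r.1 =
        gc.act p.1 (gc.act q.1 r.2 ⊔ gc.actr q.2 r.1) ⊔ gc.actr p.2 (q.1 * r.1)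
      rw [gc.act_mul, actr_sup_left, act_sup_right, ← gc.act_actr, gc.actr_mul,
        sup_assoc]
  · -- joins
    intro s hs
    show gc.φ (sSup s).2 ≤ (sSup s).1
    rw [Prod.snd_sSup, Prod.fst_sSup, gc.φ_sSup]
    apply iSup₂_le
    rintro c ⟨p, hp, rfl⟩
    exact le_trans (hs hp) (le_sSup ⟨p, hp, rfl⟩)
  · -- left distributivity
    intro p s
    apply Prod.ext
    · show p.1 * (sSup s).1 = (⨆ q ∈ s, mulG gc.toCouple p q).1
      rw [Prod.fst_sSup, Quantale'.mul_sSup]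
      simp only [Prod.fst_iSup]
      rw [iSup_image]
      rfl
    · show gc.act p.1 (sSup s).2 ⊔ gc.actr p.2 (sSup s).1 =
        (⨆ q ∈ s, mulG gc.toCouple p q).2
      rw [Prod.snd_sSup, Prod.fst_sSup, gc.act_sSup, gc.actr_sSup,
        iSup_image, iSup_image]
      simp only [Prod.snd_iSup]
      rw [← biSup_sup']
      rfl
  · -- right distributivity
    intro p s
    apply Prod.ext
    · show (sSup s).1 * p.1 = (⨆ q ∈ s, mulG gc.toCouple q p).1
      rw [Prod.fst_sSup, Quantale'.sSup_mul]
      simp only [Prod.fst_iSup]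
      rw [iSup_image]
      rfl
    · show gc.act (sSup s).1 p.2 ⊔ gc.actr (sSup s).2 p.1 =
        (⨆ q ∈ s, mulG gc.toCouple q p).2
      rw [Prod.snd_sSup, Prod.fst_sSup, gc.sSup_act, gc.sSup_actr,
        iSup_image, iSup_image]
      simp only [Prod.snd_iSup]
      rw [← biSup_sup']
      rfl
  · -- gamma mem
    intro c
    exact le_refl (gc.φ c)
  · -- gamma sSup
    intro s
    apply Prod.ext
    · show gc.φ (sSup s) = (⨆ c ∈ s, gamma gc.toCouple c).1
      rw [gc.φ_sSup]
      simp only [Prod.fst_iSup]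
      rfl
    · show sSup s = (⨆ c ∈ s, gamma gc.toCouple c).2
      simp only [Prod.snd_iSup]
      rw [sSup_eq_iSup]
      rfl
  · -- gamma mul
    intro c₁ c₂
    apply Prod.ext
    · show gc.φ (c₁ * c₂) = gc.φ c₁ * gc.φ c₂
      rw [← gc.couple_left, gc.φ_act]
    · show c₁ * c₂ = gc.act (gc.φ c₁) c₂ ⊔ gc.actr c₁ (gc.φ c₂)
      rw [gc.couple_left, gc.couple_right, sup_idem]
  · -- alpha mul
    intro p q
    rfl
  · -- alpha sSup
    intro s
    rw [Prod.fst_sSup, sSup_image]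
  · -- alpha gamma
    intro c
    rfl
  · -- unit
    constructor
    · show gc.φ ⊥ ≤ eG gc
      rw [φ_bot]
      exact bot_le
    · intro p _
      constructor
      · apply Prod.ext
        · exact eG_mul gc p.1
        · show gc.act (eG gc) p.2 ⊔ gc.actr ⊥ p.1 = p.2
          rw [act_eG, actr_bot, sup_bot_eq]
      · apply Prod.ext
        · exact mul_eG gc p.1
        · show gc.act p.1 ⊥ ⊔ gc.actr p.2 (eG gc) = p.2
          rw [act_bot, actr_eG, bot_sup_eq]
  · -- cyclic
    refine ⟨le_top, ?_⟩
    intro p q _ _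
    rw [le_dG_iff, le_dG_iff]
    show gc.act p.1 q.2 ⊔ gc.actr p.2 q.1 ≤ gc.d ↔
      gc.act q.1 p.2 ⊔ gc.actr q.2 p.1 ≤ gc.d
    rw [sup_le_iff, sup_le_iff]
    constructor <;> rintro ⟨h1, h2⟩ <;>
      exact ⟨(gc.cyclic _ _).mpr h2, (gc.cyclic _ _).mp h1⟩
  · -- perps
    intro p hp
    exact ⟨lperp_eq gc hp, rperp_eq gc hp⟩
  · -- dualizing
    intro p hp
    constructor
    · rw [rperp_eq gc hp, lperp_eq gc (perp_mem_G gc hp)]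
      apply Prod.ext
      · exact cperp_aperp gc p.1
      · exact aperp_cperp gc p.2
    · rw [lperp_eq gc hp, rperp_eq gc (perp_mem_G gc hp)]
      apply Prod.ext
      · exact cperp_aperp gc p.1
      · exact aperp_cperp gc p.2


end Stmt17
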